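/- Let X be a finite set with n = |X| ≥ 4 and let r ∈ X. Then there exists a split system 𝒮 on X that is rooted-injective relative to r with dim(𝒮) = 2, and moreover ID^r(n) = 2. -/

import Mathlib

namespace InjectiveSplitSystems

open Finset

variable {α : Type*} [DecidableEq α]

/-- A split of `X`: an unordered bipartition of `X` into two nonempty disjoint parts,
represented as the two-element set `{A, B}` of its parts. -/
def IsSplit (X : Finset α) (S : Finset (Finset α)) : Prop :=
  ∃ A B : Finset α, S = {A, B} ∧ A ∪ B = X ∧ A ∩ B = ∅ ∧ A ≠ ∅ ∧ B ≠ ∅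

/-- `S` is an `r`-split of `X`: a split of `X` whose minimum part size is `r`. -/
def IsRSplit (X : Finset α) (r : ℕ) (S : Finset (Finset α)) : Prop :=
  IsSplit X S ∧ (∃ A ∈ S, A.card = r) ∧ ∀ A ∈ S, r ≤ A.card

/-- A split system on `X`: a set of splits of `X` containing all trivial splits
`{x} | X \ {x}`, `x ∈ X`. -/
def IsSplitSystem (X : Finset α) (𝒮 : Finset (Finset (Finset α))) : Prop :=
  (∀ S ∈ 𝒮, IsSplit X S) ∧ ∀ x ∈ X, ({{x}, X \ {x}} : Finset (Finset α)) ∈ 𝒮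

/-- `phiNe Y Y' S` says `φ_Y(S) ≠ φ_{Y'}(S)`: the part of `S` containing at least two
elements of the 3-set `Y` differs from the part of `S` containing at least two
elements of the 3-set `Y'`. -/
def phiNe (Y Y' : Finset α) (S : Finset (Finset α)) : Prop :=
  ∃ t ∈ S, ∃ t' ∈ S, t ≠ t' ∧ 2 ≤ (Y ∩ t).card ∧ 2 ≤ (Y' ∩ t').card

/-- A split system on `X` is injective if for all distinct 3-subsets `Y`, `Y'` of `X`
there is a split `S ∈ 𝒮` with `φ_Y(S) ≠ φ_{Y'}(S)`. -/
def IsInjective (X : Finset α) (𝒮 : Finset (Finset (Finset α))) : Prop :=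
  ∀ Y Y' : Finset α, Y ⊆ X → Y' ⊆ X → Y.card = 3 → Y'.card = 3 → Y ≠ Y' →
    ∃ S ∈ 𝒮, phiNe Y Y' S

/-- The restriction `S|_Y` of a split to `Y`, as the set of restricted parts. -/
def restrictSplit (S : Finset (Finset α)) (Y : Finset α) : Finset (Finset α) :=
  S.image (· ∩ Y)

open scoped Classical in
/-- The restriction `𝒮|_Y` of a split system to `Y`: all splits
`(A ∩ Y) | (B ∩ Y)` with `A|B ∈ 𝒮` and both intersections nonempty. -/
noncomputable def restrictSS (𝒮 : Finset (Finset (Finset α))) (Y : Finset α) :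
    Finset (Finset (Finset α)) :=
  (𝒮.image fun S => restrictSplit S Y).filter fun T => ∀ t ∈ T, t ≠ ∅

/-- `𝒮` 4-dices `X`. -/
def FourDices (X : Finset α) (𝒮 : Finset (Finset (Finset α))) : Prop :=
  X.card < 4 ∨ ∀ Y ⊆ X, Y.card = 4 →
    ∃ 𝒯 ⊆ restrictSS 𝒮 Y, 2 ≤ 𝒯.card ∧ ∀ S ∈ 𝒯, IsRSplit Y 2 S

/-- `𝒮` 5-dices `X`. -/
def FiveDices (X : Finset α) (𝒮 : Finset (Finset (Finset α))) : Prop :=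
  X.card < 5 ∨ ∀ Y ⊆ X, Y.card = 5 →
    ∃ 𝒯 ⊆ restrictSS 𝒮 Y, 5 ≤ 𝒯.card ∧ ∀ S ∈ 𝒯, IsRSplit Y 2 S

/-- `𝒮` 6-dices `X`: every 6-subset restriction contains a 3-split or a triangle
of 2-splits. -/
def SixDices (X : Finset α) (𝒮 : Finset (Finset (Finset α))) : Prop :=
  X.card < 6 ∨ ∀ Y ⊆ X, Y.card = 6 →
    (∃ S ∈ restrictSS 𝒮 Y, IsRSplit Y 3 S) ∨
    (∃ x ∈ Y, ∃ y ∈ Y, ∃ z ∈ Y, x ≠ y ∧ x ≠ z ∧ y ≠ z ∧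
      ({{x, y}, Y \ {x, y}} : Finset (Finset α)) ∈ restrictSS 𝒮 Y ∧
      ({{x, z}, Y \ {x, z}} : Finset (Finset α)) ∈ restrictSS 𝒮 Y ∧
      ({{y, z}, Y \ {y, z}} : Finset (Finset α)) ∈ restrictSS 𝒮 Y)

/-- Two splits are incompatible if they are distinct and all four pairwise
intersections of their parts are nonempty. -/
def Incompatible (S T : Finset (Finset α)) : Prop :=
  S ≠ T ∧ ∀ A ∈ S, ∀ B ∈ T, A ∩ B ≠ ∅

open scoped Classical in
/-- The dimension of a split system: maximum size of a pairwise incompatible subset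
(which is `1` when all splits are pairwise compatible and `𝒮` is nonempty). -/
noncomputable def dimSS (𝒮 : Finset (Finset (Finset α))) : ℕ :=
  (𝒮.powerset.filter fun 𝒯 => ∀ S ∈ 𝒯, ∀ T ∈ 𝒯, S ≠ T → Incompatible S T).sup Finset.card

/-- The injective dimension `ID(n)`: minimum dimension of an injective split system
on `{1, …, n}`. -/
noncomputable def ID (n : ℕ) : ℕ :=
  sInf {d : ℕ | ∃ 𝒮 : Finset (Finset (Finset ℕ)),
    IsSplitSystem (Finset.Icc 1 n) 𝒮 ∧ IsInjective (Finset.Icc 1 n) 𝒮 ∧ dimSS 𝒮 = d}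

/-- The injective 2-split dimension `ID₂(n)`: minimum dimension of an injective split
system on `{1, …, n}` all of whose non-trivial splits have size 2. -/
noncomputable def ID2 (n : ℕ) : ℕ :=
  sInf {d : ℕ | ∃ 𝒮 : Finset (Finset (Finset ℕ)),
    IsSplitSystem (Finset.Icc 1 n) 𝒮 ∧ IsInjective (Finset.Icc 1 n) 𝒮 ∧
    (∀ S ∈ 𝒮, IsRSplit (Finset.Icc 1 n) 1 S ∨ IsRSplit (Finset.Icc 1 n) 2 S) ∧
    dimSS 𝒮 = d}

/-- `𝒮` is rooted-injective relative to `r`. -/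
def IsRootedInjective (X : Finset α) (r : α) (𝒮 : Finset (Finset (Finset α))) : Prop :=
  ∀ Z Z' : Finset α, Z ⊆ X \ {r} → Z' ⊆ X \ {r} → Z.card = 2 → Z'.card = 2 → Z ≠ Z' →
    ∃ S ∈ 𝒮, phiNe (insert r Z) (insert r Z') S

/-- The rooted-injective dimension `ID^r(n)`: minimum dimension of a split system on an
`n`-element set that is rooted-injective relative to a given element. -/
noncomputable def IDr (n : ℕ) : ℕ :=
  sInf {d : ℕ | ∃ 𝒮 : Finset (Finset (Finset ℕ)),
    IsSplitSystem (Finset.Icc 1 n) 𝒮 ∧ IsRootedInjective (Finset.Icc 1 n) 1 𝒮 ∧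
    dimSS 𝒮 = d}

/-- `𝒮` is circular: there is a labelling `x_1, …, x_n` of `X` such that every split
of `𝒮` has the form `{x_i, …, x_j} | complement`. -/
def IsCircular (X : Finset α) (𝒮 : Finset (Finset (Finset α))) : Prop :=
  ∃ f : ℕ → α, Set.InjOn f ↑(Finset.Icc 1 X.card) ∧
    (Finset.Icc 1 X.card).image f = X ∧
    ∀ S ∈ 𝒮, ∃ i j : ℕ, 1 ≤ i ∧ i ≤ j ∧ j ≤ X.card ∧
      S = {(Finset.Icc i j).image f, X \ (Finset.Icc i j).image f}

/-- `𝒮` is maximal circular: circular and not properly contained in any circular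
split system on `X`. -/
def IsMaximalCircular (X : Finset α) (𝒮 : Finset (Finset (Finset α))) : Prop :=
  IsCircular X 𝒮 ∧ ∀ 𝒮' : Finset (Finset (Finset α)),
    IsSplitSystem X 𝒮' → IsCircular X 𝒮' → 𝒮 ⊆ 𝒮' → 𝒮' = 𝒮

/-- The degree of `x` in the graph `P(𝒮)` on vertex set `X` whose edges are the
pairs `{x, y}` with `xy | X − {x,y} ∈ 𝒮`. -/
def degP (X : Finset α) (𝒮 : Finset (Finset (Finset α))) (x : α) : ℕ :=
  ((X \ {x}).filter fun y => ({{x, y}, X \ {x, y}} : Finset (Finset α)) ∈ 𝒮).card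

/-- `P(𝒮)` contains a 3-clique. -/
def HasTriangle (X : Finset α) (𝒮 : Finset (Finset (Finset α))) : Prop :=
  ∃ x ∈ X, ∃ y ∈ X, ∃ z ∈ X, x ≠ y ∧ x ≠ z ∧ y ≠ z ∧
    ({{x, y}, X \ {x, y}} : Finset (Finset α)) ∈ 𝒮 ∧
    ({{x, z}, X \ {x, z}} : Finset (Finset α)) ∈ 𝒮 ∧
    ({{y, z}, X \ {y, z}} : Finset (Finset α)) ∈ 𝒮

/-- Conditions (B1) and (B2) for a map to be a vertex of the Buneman graph. -/
def IsBunemanVertex (𝒮 : Finset (Finset (Finset α))) (φ : {S // S ∈ 𝒮} → Finset α) : Prop :=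
  (∀ S, φ S ∈ S.1) ∧ ∀ S S', S ≠ S' → (φ S ∩ φ S').Nonempty

/-- The vertex set of the Buneman graph `B(𝒮)`. -/
abbrev BunemanVertex (𝒮 : Finset (Finset (Finset α))) : Type _ :=
  {φ : {S // S ∈ 𝒮} → Finset α // IsBunemanVertex 𝒮 φ}

/-- The Buneman graph `B(𝒮)`: two vertices are adjacent iff they differ on exactly
one split. -/
def BunemanGraph (𝒮 : Finset (Finset (Finset α))) : SimpleGraph (BunemanVertex 𝒮) where
  Adj φ ψ := ∃! S, φ.1 S ≠ ψ.1 S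
  symm := by
    constructor
    rintro φ ψ ⟨S, hS, hU⟩
    exact ⟨S, hS.symm, fun T hT => hU T hT.symm⟩
  loopless := by
    constructor
    rintro φ ⟨S, hS, -⟩
    exact hS rfl

/-- `m` is a median of `u`, `v`, `w` in the graph `G`. -/
def IsMedian {V : Type*} (G : SimpleGraph V) (u v w m : V) : Prop :=
  G.dist u m + G.dist m v = G.dist u v ∧
  G.dist v m + G.dist m w = G.dist v w ∧
  G.dist u m + G.dist m w = G.dist u w


/-! ### Auxiliary lemmas for Statement 19 -/

lemma phiNe_symm {Y Y' : Finset α} {S : Finset (Finset α)} (h : phiNe Y Y' S) :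
    phiNe Y' Y S := by
  obtain ⟨t, ht, t', ht', hne, h1, h2⟩ := h
  exact ⟨t', ht', t, ht, hne.symm, h2, h1⟩

lemma incompatible_symm {S T : Finset (Finset α)} (h : Incompatible S T) :
    Incompatible T S := by
  refine ⟨h.1.symm, fun A hA B hB => ?_⟩
  rw [Finset.inter_comm]
  exact h.2 B hB A hA

/-- Given a split and one part, recover the other part. -/
lemma split_other {X : Finset α} {S : Finset (Finset α)} (hS : IsSplit X S)
    {B : Finset α} (hB : B ∈ S) :
    ∃ A ∈ S, A ∪ B = X ∧ A ∩ B = ∅ ∧ (∀ C ∈ S, C = A ∨ C = B) := by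
  obtain ⟨A0, B0, rfl, hun, hint, _, _⟩ := hS
  rcases mem_insert.1 hB with h | h
  · subst h
    refine ⟨B0, mem_insert_of_mem (mem_singleton_self _), ?_, ?_, ?_⟩
    · rw [union_comm]; exact hun
    · rw [inter_comm]; exact hint
    · intro C hC
      rcases mem_insert.1 hC with h' | h'
      · exact Or.inr h'
      · exact Or.inl (mem_singleton.1 h')
  · rw [mem_singleton.1 h]
    refine ⟨A0, mem_insert_self _ _, hun, hint, ?_⟩
    intro C hC
    rcases mem_insert.1 hC with h' | h'
    · exact Or.inl h'
    · exact Or.inr (mem_singleton.1 h')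

lemma triv_compat {X : Finset α} {T : Finset (Finset α)} {x : α} (hT : IsSplit X T)
    (hx : x ∈ X) (h : Incompatible ({{x}, X \ {x}} : Finset (Finset α)) T) : False := by
  obtain ⟨A, B, rfl, hun, hint, _, _⟩ := hT
  have hx' : x ∈ A ∪ B := hun.symm ▸ hx
  rcases mem_union.1 hx' with hA | hB
  · refine h.2 {x} (mem_insert_self _ _) B (mem_insert_of_mem (mem_singleton_self _)) ?_
    refine singleton_inter_of_notMem fun hxB => ?_
    exact (eq_empty_iff_forall_notMem.1 hint x) (mem_inter.2 ⟨hA, hxB⟩)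
  · refine h.2 {x} (mem_insert_self _ _) A (mem_insert_self _ _) ?_
    refine singleton_inter_of_notMem fun hxA => ?_
    exact (eq_empty_iff_forall_notMem.1 hint x) (mem_inter.2 ⟨hxA, hB⟩)

lemma incompat_of_traces {X : Finset α} {r x y z : α} {S S' : Finset (Finset α)}
    {B B' : Finset α}
    (hS : IsSplit X S) (hS' : IsSplit X S') (hB : B ∈ S) (hB' : B' ∈ S')
    (hr : r ∈ X) (hrB : r ∉ B) (hrB' : r ∉ B')
    (hx : x ∈ X) (hy : y ∈ X) (hz : z ∈ X)
    (h1 : x ∈ B) (h2 : y ∈ B) (h3 : z ∉ B)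
    (h4 : y ∈ B') (h5 : z ∈ B') (h6 : x ∉ B') :
    Incompatible S S' := by
  obtain ⟨A, hA, hAu, hAi, hAll⟩ := split_other hS hB
  obtain ⟨A', hA', hAu', hAi', hAll'⟩ := split_other hS' hB'
  have hmemA : ∀ w ∈ X, w ∉ B → w ∈ A := by
    intro w hw hwB
    rcases mem_union.1 (hAu.symm ▸ hw : w ∈ A ∪ B) with h | h
    · exact h
    · exact absurd h hwB
  have hmemA' : ∀ w ∈ X, w ∉ B' → w ∈ A' := by
    intro w hw hwB
    rcases mem_union.1 (hAu'.symm ▸ hw : w ∈ A' ∪ B') with h | h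
    · exact h
    · exact absurd h hwB
  constructor
  · intro hSS
    rcases hAll' B (hSS ▸ hB) with h | h
    · exact hrB (h ▸ hmemA' r hr hrB')
    · exact h6 (h ▸ h1)
  · intro U hU V hV
    rcases hAll U hU with rfl | rfl <;> rcases hAll' V hV with rfl | rfl
    · exact (Finset.Nonempty.ne_empty ⟨r, mem_inter.2 ⟨hmemA r hr hrB, hmemA' r hr hrB'⟩⟩)
    · exact (Finset.Nonempty.ne_empty ⟨z, mem_inter.2 ⟨hmemA z hz h3, h5⟩⟩)
    · exact (Finset.Nonempty.ne_empty ⟨x, mem_inter.2 ⟨h1, hmemA' x hx h6⟩⟩)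
    · exact (Finset.Nonempty.ne_empty ⟨y, mem_inter.2 ⟨h2, h4⟩⟩)

/-- Extract, from `phiNe (insert r Z) (insert r Z') S`, a part `B` of `S` avoiding `r`
that contains exactly one of `Z`, `Z'`. -/
lemma extract {X : Finset α} {r : α} (hr : r ∈ X) {S : Finset (Finset α)} {Z Z' : Finset α}
    (hS : IsSplit X S) (hZc : Z.card = 2) (hZ'c : Z'.card = 2)
    (h : phiNe (insert r Z) (insert r Z') S) :
    ∃ B ∈ S, r ∉ B ∧ ((Z ⊆ B ∧ ¬ Z' ⊆ B) ∨ (Z' ⊆ B ∧ ¬ Z ⊆ B)) := by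
  obtain ⟨t, ht, t', ht', hne, hc, hc'⟩ := h
  obtain ⟨A, hA, hAu, hAi, hAll⟩ := split_other hS ht
  have ht'A : t' = A := by
    rcases hAll t' ht' with h | h
    · exact h
    · exact absurd h.symm hne
  subst ht'A
  have hu : t ∪ t' = X := by rw [union_comm]; exact hAu
  have hi : t ∩ t' = ∅ := by rw [inter_comm]; exact hAi
  have hdisj : ∀ w, w ∈ t → w ∈ t' → False := fun w h1 h2 =>
    (eq_empty_iff_forall_notMem.1 hi w) (mem_inter.2 ⟨h1, h2⟩)
  have two_sub : ∀ (W u : Finset α), W.card = 2 → 2 ≤ ((insert r W) ∩ u).card →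
      r ∉ u → W ⊆ u := by
    intro W u hW hcard hru
    rw [insert_inter_of_notMem hru] at hcard
    have hsub : W ∩ u ⊆ W := inter_subset_left
    have heq : W ∩ u = W := eq_of_subset_of_card_le hsub (by omega)
    exact inter_eq_left.1 heq
  have exists_mem : ∀ (W u : Finset α), 2 ≤ ((insert r W) ∩ u).card → ∃ w ∈ W, w ∈ u := by
    intro W u hcard
    by_contra hno
    push_neg at hno
    have hsub : (insert r W) ∩ u ⊆ {r} := by
      intro v hv
      rcases mem_insert.1 (mem_inter.1 hv).1 with rfl | hvW
      · exact mem_singleton_self _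
      · exact absurd (mem_inter.1 hv).2 (hno v hvW)
    have := card_le_card hsub
    simp at this
    omega
  rcases mem_union.1 (hu.symm ▸ hr : r ∈ t ∪ t') with hrt | hrt'
  · -- r ∈ t, take B := t'
    have hrt' : r ∉ t' := fun h => hdisj r hrt h
    have hZ't' : Z' ⊆ t' := two_sub Z' t' hZ'c hc' hrt'
    obtain ⟨w, hwZ, hwt⟩ := exists_mem Z t hc
    exact ⟨t', ht', hrt', Or.inr ⟨hZ't', fun hsub => hdisj w hwt (hsub hwZ)⟩⟩
  · -- r ∈ t', take B := t
    have hrt : r ∉ t := fun h => hdisj r h hrt'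
    have hZt : Z ⊆ t := two_sub Z t hZc hc hrt
    obtain ⟨w, hwZ', hwt'⟩ := exists_mem Z' t' hc'
    exact ⟨t, ht, hrt, Or.inl ⟨hZt, fun hsub => hdisj w (hsub hwZ') hwt'⟩⟩

/-- Lower bound: any rooted-injective split system on a set of size `≥ 4` has dimension
at least `2`. -/
lemma two_le_dimSS {X : Finset α} {r : α} (h4 : 4 ≤ X.card) (hr : r ∈ X)
    {𝒮 : Finset (Finset (Finset α))} (hsys : IsSplitSystem X 𝒮)
    (hinj : IsRootedInjective X r 𝒮) : 2 ≤ dimSS 𝒮 := by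
  classical
  have hMcard : 2 < (X \ {r}).card := by
    rw [card_sdiff_of_subset (singleton_subset_iff.2 hr), card_singleton]
    omega
  obtain ⟨a, b, c, ha, hb, hc, hab, hac, hbc⟩ := two_lt_card_iff.1 hMcard
  have haX : a ∈ X := (mem_sdiff.1 ha).1
  have hbX : b ∈ X := (mem_sdiff.1 hb).1
  have hcX : c ∈ X := (mem_sdiff.1 hc).1
  have hZ1 : ({a, b} : Finset α) ⊆ X \ {r} := insert_subset_iff.2 ⟨ha, singleton_subset_iff.2 hb⟩
  have hZ2 : ({a, c} : Finset α) ⊆ X \ {r} := insert_subset_iff.2 ⟨ha, singleton_subset_iff.2 hc⟩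
  have hZ3 : ({b, c} : Finset α) ⊆ X \ {r} := insert_subset_iff.2 ⟨hb, singleton_subset_iff.2 hc⟩
  have hc1 : ({a, b} : Finset α).card = 2 := card_pair hab
  have hc2 : ({a, c} : Finset α).card = 2 := card_pair hac
  have hc3 : ({b, c} : Finset α).card = 2 := card_pair hbc
  have hne12 : ({a, b} : Finset α) ≠ {a, c} := by
    intro h
    have : c ∈ ({a, b} : Finset α) := by
      rw [h]; exact mem_insert_of_mem (mem_singleton_self c)
    rcases mem_insert.1 this with h' | h'
    · exact hac h'.symm
    · exact hbc (mem_singleton.1 h').symm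
  have hne13 : ({a, b} : Finset α) ≠ {b, c} := by
    intro h
    have : c ∈ ({a, b} : Finset α) := by
      rw [h]; exact mem_insert_of_mem (mem_singleton_self c)
    rcases mem_insert.1 this with h' | h'
    · exact hac h'.symm
    · exact hbc (mem_singleton.1 h').symm
  have hne23 : ({a, c} : Finset α) ≠ {b, c} := by
    intro h
    have : b ∈ ({a, c} : Finset α) := by
      rw [h]; exact mem_insert_self b {c}
    rcases mem_insert.1 this with h' | h'
    · exact hab h'.symm
    · exact hbc (mem_singleton.1 h')
  obtain ⟨S12, hS12m, hphi12⟩ := hinj _ _ hZ1 hZ2 hc1 hc2 hne12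
  obtain ⟨S13, hS13m, hphi13⟩ := hinj _ _ hZ1 hZ3 hc1 hc3 hne13
  obtain ⟨S23, hS23m, hphi23⟩ := hinj _ _ hZ2 hZ3 hc2 hc3 hne23
  have hsp12 := hsys.1 _ hS12m
  have hsp13 := hsys.1 _ hS13m
  have hsp23 := hsys.1 _ hS23m
  obtain ⟨B12, hB12m, hrB12, h12⟩ := extract hr hsp12 hc1 hc2 hphi12
  obtain ⟨B13, hB13m, hrB13, h13⟩ := extract hr hsp13 hc1 hc3 hphi13
  obtain ⟨B23, hB23m, hrB23, h23⟩ := extract hr hsp23 hc2 hc3 hphi23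
  -- translate the subset conditions into element conditions
  have pair_sub : ∀ (u v : α) (B : Finset α), ({u, v} : Finset α) ⊆ B → u ∈ B ∧ v ∈ B := by
    intro u v B h
    exact ⟨h (mem_insert_self u {v}), h (mem_insert_of_mem (mem_singleton_self v))⟩
  have t12 : (a ∈ B12 ∧ b ∈ B12 ∧ c ∉ B12) ∨ (a ∈ B12 ∧ c ∈ B12 ∧ b ∉ B12) := by
    rcases h12 with ⟨h1, h2⟩ | ⟨h1, h2⟩
    · obtain ⟨haB, hbB⟩ := pair_sub a b _ h1
      refine Or.inl ⟨haB, hbB, fun hcB => h2 ?_⟩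
      exact insert_subset_iff.2 ⟨haB, singleton_subset_iff.2 hcB⟩
    · obtain ⟨haB, hcB⟩ := pair_sub a c _ h1
      refine Or.inr ⟨haB, hcB, fun hbB => h2 ?_⟩
      exact insert_subset_iff.2 ⟨haB, singleton_subset_iff.2 hbB⟩
  have t13 : (a ∈ B13 ∧ b ∈ B13 ∧ c ∉ B13) ∨ (b ∈ B13 ∧ c ∈ B13 ∧ a ∉ B13) := by
    rcases h13 with ⟨h1, h2⟩ | ⟨h1, h2⟩
    · obtain ⟨haB, hbB⟩ := pair_sub a b _ h1
      refine Or.inl ⟨haB, hbB, fun hcB => h2 ?_⟩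
      exact insert_subset_iff.2 ⟨hbB, singleton_subset_iff.2 hcB⟩
    · obtain ⟨hbB, hcB⟩ := pair_sub b c _ h1
      refine Or.inr ⟨hbB, hcB, fun haB => h2 ?_⟩
      exact insert_subset_iff.2 ⟨haB, singleton_subset_iff.2 hbB⟩
  have t23 : (a ∈ B23 ∧ c ∈ B23 ∧ b ∉ B23) ∨ (b ∈ B23 ∧ c ∈ B23 ∧ a ∉ B23) := by
    rcases h23 with ⟨h1, h2⟩ | ⟨h1, h2⟩
    · obtain ⟨haB, hcB⟩ := pair_sub a c _ h1
      refine Or.inl ⟨haB, hcB, fun hbB => h2 ?_⟩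
      exact insert_subset_iff.2 ⟨hbB, singleton_subset_iff.2 hcB⟩
    · obtain ⟨hbB, hcB⟩ := pair_sub b c _ h1
      refine Or.inr ⟨hbB, hcB, fun haB => h2 ?_⟩
      exact insert_subset_iff.2 ⟨haB, singleton_subset_iff.2 hcB⟩
  -- find two splits with distinct traces
  have key : ∃ S ∈ 𝒮, ∃ T ∈ 𝒮, Incompatible S T := by
    rcases t12 with ⟨ha1, hb1, hc1'⟩ | ⟨ha1, hc1', hb1⟩
    · -- trace of B12 is {a,b}; compare with B23 (trace {a,c} or {b,c})
      rcases t23 with ⟨ha2, hc2', hb2⟩ | ⟨hb2, hc2', ha2⟩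
      · -- traces {a,b} vs {a,c}: shared a, b ∈ B12 \ B23, c ∈ B23 \ B12
        exact ⟨S12, hS12m, S23, hS23m,
          incompat_of_traces hsp12 hsp23 hB12m hB23m hr hrB12 hrB23 hbX haX hcX
            hb1 ha1 hc1' ha2 hc2' hb2⟩
      · -- traces {a,b} vs {b,c}: shared b, a ∈ B12 \ B23, c ∈ B23 \ B12
        exact ⟨S12, hS12m, S23, hS23m,
          incompat_of_traces hsp12 hsp23 hB12m hB23m hr hrB12 hrB23 haX hbX hcX
            ha1 hb1 hc1' hb2 hc2' ha2⟩
    · -- trace of B12 is {a,c}; compare with B13 (trace {a,b} or {b,c})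
      rcases t13 with ⟨ha2, hb2, hc2'⟩ | ⟨hb2, hc2', ha2⟩
      · -- traces {a,c} vs {a,b}: shared a, c ∈ B12 \ B13, b ∈ B13 \ B12
        exact ⟨S12, hS12m, S13, hS13m,
          incompat_of_traces hsp12 hsp13 hB12m hB13m hr hrB12 hrB13 hcX haX hbX
            hc1' ha1 hb1 ha2 hb2 hc2'⟩
      · -- traces {a,c} vs {b,c}: shared c, a ∈ B12 \ B13, b ∈ B13 \ B12
        exact ⟨S12, hS12m, S13, hS13m,
          incompat_of_traces hsp12 hsp13 hB12m hB13m hr hrB12 hrB13 haX hcX hbX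
            ha1 hc1' hb1 hc2' hb2 ha2⟩
  obtain ⟨S, hSm, T, hTm, hST⟩ := key
  have hneST : S ≠ T := hST.1
  rw [dimSS]
  have hmem : ({S, T} : Finset (Finset (Finset α))) ∈
      (𝒮.powerset.filter fun 𝒯 => ∀ S ∈ 𝒯, ∀ T ∈ 𝒯, S ≠ T → Incompatible S T) := by
    refine mem_filter.2 ⟨mem_powerset.2 (insert_subset_iff.2 ⟨hSm, singleton_subset_iff.2 hTm⟩), ?_⟩
    intro U hU V hV hUV
    rcases mem_insert.1 hU with rfl | hU' <;> rcases mem_insert.1 hV with rfl | hV'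
    · exact absurd rfl hUV
    · rw [mem_singleton.1 hV']; exact hST
    · rw [mem_singleton.1 hU']; exact incompatible_symm hST
    · rw [mem_singleton.1 hU', mem_singleton.1 hV'] at hUV; exact absurd rfl hUV
  calc 2 = ({S, T} : Finset (Finset (Finset α))).card := (card_pair hneST).symm
    _ ≤ _ := Finset.le_sup hmem

/-! ### A rooted-injective split system of dimension 2 -/

/-- Index of an element in the list of `X.erase r`. -/
noncomputable def idxL (X : Finset α) (r : α) (x : α) : ℕ := (X.erase r).toList.idxOf x

/-- Prefix set: elements of `X.erase r` with index at most that of `y`. -/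
noncomputable def preS (X : Finset α) (r y : α) : Finset α :=
  (X.erase r).filter fun z => idxL X r z ≤ idxL X r y

/-- Suffix set: elements of `X.erase r` with index at least that of `y`. -/
noncomputable def sufS (X : Finset α) (r y : α) : Finset α :=
  (X.erase r).filter fun z => idxL X r y ≤ idxL X r z

/-- The split system: all trivial splits together with prefix and suffix splits. -/
noncomputable def SS (X : Finset α) (r : α) : Finset (Finset (Finset α)) :=
  X.image (fun x => ({{x}, X \ {x}} : Finset (Finset α)))
    ∪ (X.erase r).image (fun y => ({preS X r y, X \ preS X r y} : Finset (Finset α)))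
    ∪ (X.erase r).image (fun y => ({sufS X r y, X \ sufS X r y} : Finset (Finset α)))

lemma idxL_inj {X : Finset α} {r x y : α} (hx : x ∈ X.erase r) (hy : y ∈ X.erase r)
    (h : idxL X r x = idxL X r y) : x = y :=
  (List.idxOf_inj (mem_toList.2 hx)).1 h

lemma preS_subset (X : Finset α) (r y : α) : preS X r y ⊆ X.erase r := filter_subset _ _
lemma sufS_subset (X : Finset α) (r y : α) : sufS X r y ⊆ X.erase r := filter_subset _ _

lemma r_not_mem_preS (X : Finset α) (r y : α) : r ∉ preS X r y :=
  fun h => notMem_erase r X (preS_subset X r y h)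
lemma r_not_mem_sufS (X : Finset α) (r y : α) : r ∉ sufS X r y :=
  fun h => notMem_erase r X (sufS_subset X r y h)

lemma mem_preS {X : Finset α} {r y z : α} :
    z ∈ preS X r y ↔ z ∈ X.erase r ∧ idxL X r z ≤ idxL X r y := mem_filter
lemma mem_sufS {X : Finset α} {r y z : α} :
    z ∈ sufS X r y ↔ z ∈ X.erase r ∧ idxL X r y ≤ idxL X r z := mem_filter

lemma isSplit_pair {X B : Finset α} (hBX : B ⊆ X) (hB : B.Nonempty)
    (hBc : (X \ B).Nonempty) : IsSplit X ({B, X \ B} : Finset (Finset α)) :=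
  ⟨B, X \ B, rfl, union_sdiff_of_subset hBX, inter_sdiff_self _ _,
    hB.ne_empty, hBc.ne_empty⟩

lemma SS_split {X : Finset α} {r : α} (h4 : 4 ≤ X.card) (hr : r ∈ X)
    {S : Finset (Finset α)} (hS : S ∈ SS X r) : IsSplit X S := by
  have hrX : ∀ B : Finset α, B ⊆ X.erase r → (X \ B).Nonempty := by
    intro B hB
    exact ⟨r, mem_sdiff.2 ⟨hr, fun h => notMem_erase r X (hB h)⟩⟩
  rcases mem_union.1 hS with h | h
  · rcases mem_union.1 h with h' | h'
    · obtain ⟨x, hx, rfl⟩ := mem_image.1 h'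
      refine isSplit_pair (singleton_subset_iff.2 hx) ⟨x, mem_singleton_self x⟩ ?_
      obtain ⟨y, hy, hyx⟩ := exists_mem_ne (show 1 < X.card by omega) x
      exact ⟨y, mem_sdiff.2 ⟨hy, fun h => hyx (mem_singleton.1 h)⟩⟩
    · obtain ⟨y, hy, rfl⟩ := mem_image.1 h'
      refine isSplit_pair ((preS_subset X r y).trans (erase_subset r X))
        ⟨y, mem_preS.2 ⟨hy, le_refl _⟩⟩ (hrX _ (preS_subset X r y))
  · obtain ⟨y, hy, rfl⟩ := mem_image.1 h
    refine isSplit_pair ((sufS_subset X r y).trans (erase_subset r X))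
      ⟨y, mem_sufS.2 ⟨hy, le_refl _⟩⟩ (hrX _ (sufS_subset X r y))

lemma SS_system {X : Finset α} {r : α} (h4 : 4 ≤ X.card) (hr : r ∈ X) :
    IsSplitSystem X (SS X r) := by
  refine ⟨fun S hS => SS_split h4 hr hS, fun x hx => ?_⟩
  exact mem_union_left _ (mem_union_left _ (mem_image_of_mem _ hx))

lemma pre_mem_SS {X : Finset α} {r y : α} (hy : y ∈ X.erase r) :
    ({preS X r y, X \ preS X r y} : Finset (Finset α)) ∈ SS X r :=
  mem_union_left _ (mem_union_right _ (mem_image_of_mem _ hy))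

lemma suf_mem_SS {X : Finset α} {r y : α} (hy : y ∈ X.erase r) :
    ({sufS X r y, X \ sufS X r y} : Finset (Finset α)) ∈ SS X r :=
  mem_union_right _ (mem_image_of_mem _ hy)

/-- The basic phiNe producer. -/
lemma phi_helper {X : Finset α} {r : α} (hr : r ∈ X) {B Z Z' : Finset α} {w : α}
    (hB : B ⊆ X.erase r) (hZB : Z ⊆ B) (hZc : Z.card = 2)
    (hw : w ∈ Z') (hwB : w ∉ B) (hwX : w ∈ X) (hwr : w ≠ r) :
    phiNe (insert r Z) (insert r Z') ({B, X \ B} : Finset (Finset α)) := by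
  have hrB : r ∉ B := fun h => notMem_erase r X (hB h)
  obtain ⟨z, hz⟩ : Z.Nonempty := card_pos.1 (by omega)
  refine ⟨B, mem_insert_self _ _, X \ B, mem_insert_of_mem (mem_singleton_self _), ?_, ?_, ?_⟩
  · intro h
    exact (mem_sdiff.1 (h ▸ hZB hz)).2 (hZB hz)
  · calc 2 = Z.card := hZc.symm
      _ ≤ (insert r Z ∩ B).card := card_le_card fun u hu =>
          mem_inter.2 ⟨mem_insert_of_mem hu, hZB hu⟩
  · have hsub : ({r, w} : Finset α) ⊆ insert r Z' ∩ (X \ B) := by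
      intro u hu
      rcases mem_insert.1 hu with rfl | hu'
      · exact mem_inter.2 ⟨mem_insert_self _ _, mem_sdiff.2 ⟨hr, hrB⟩⟩
      · rw [mem_singleton.1 hu']
        exact mem_inter.2 ⟨mem_insert_of_mem hw, mem_sdiff.2 ⟨hwX, hwB⟩⟩
    calc 2 = ({r, w} : Finset α).card := (card_pair (Ne.symm hwr)).symm
      _ ≤ _ := card_le_card hsub

lemma pair_sorted {X : Finset α} {r : α} {Z : Finset α} (hZ : Z ⊆ X.erase r)
    (hc : Z.card = 2) :
    ∃ a ∈ X.erase r, ∃ b ∈ X.erase r, idxL X r a < idxL X r b ∧ Z = {a, b} := by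
  obtain ⟨a, b, hab, rfl⟩ := card_eq_two.1 hc
  have ha := hZ (mem_insert_self a {b})
  have hb := hZ (mem_insert_of_mem (mem_singleton_self b))
  have hne : idxL X r a ≠ idxL X r b := fun h => hab (idxL_inj ha hb h)
  rcases hne.lt_or_gt with h | h
  · exact ⟨a, ha, b, hb, h, rfl⟩
  · exact ⟨b, hb, a, ha, h, pair_comm a b⟩

lemma SS_rooted (X : Finset α) (r : α) (hr : r ∈ X) : IsRootedInjective X r (SS X r) := by
  intro Z Z' hZ hZ' hZc hZ'c hne
  rw [← erase_eq] at hZ hZ'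
  obtain ⟨a, ha, b, hb, hab, rfl⟩ := pair_sorted hZ hZc
  obtain ⟨c, hc, d, hd, hcd, rfl⟩ := pair_sorted hZ' hZ'c
  have haX : a ∈ X := mem_of_mem_erase ha
  have hbX : b ∈ X := mem_of_mem_erase hb
  have hcX : c ∈ X := mem_of_mem_erase hc
  have hdX : d ∈ X := mem_of_mem_erase hd
  have habne : a ≠ b := fun h => by rw [h] at hab; exact lt_irrefl _ hab
  have hcdne : c ≠ d := fun h => by rw [h] at hcd; exact lt_irrefl _ hcd
  rcases lt_trichotomy (idxL X r b) (idxL X r d) with h | h | h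
  · -- separate by the prefix at b
    refine ⟨_, pre_mem_SS hb, phi_helper hr (preS_subset X r b) ?_ (card_pair habne)
      (mem_insert_of_mem (mem_singleton_self d)) ?_ hdX (ne_of_mem_erase hd)⟩
    · intro u hu
      rcases mem_insert.1 hu with rfl | hu'
      · exact mem_preS.2 ⟨ha, le_of_lt hab⟩
      · rw [mem_singleton.1 hu']; exact mem_preS.2 ⟨hb, le_refl _⟩
    · intro hmem
      exact absurd (mem_preS.1 hmem).2 (by omega)
  · -- equal top indices: b = d, separate by a suffix
    have hbd : b = d := idxL_inj hb hd h
    subst hbd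
    have hac : a ≠ c := fun h' => hne (by rw [h'])
    have hacne : idxL X r a ≠ idxL X r c := fun h' => hac (idxL_inj ha hc h')
    rcases hacne.lt_or_gt with h' | h'
    · -- idx a < idx c : Z' ⊆ sufS c, a ∉ sufS c
      refine ⟨_, suf_mem_SS hc, phiNe_symm (phi_helper hr (sufS_subset X r c) ?_
        (card_pair hcdne) (mem_insert_self a ({b} : Finset α)) ?_ haX (ne_of_mem_erase ha))⟩
      · intro u hu
        rcases mem_insert.1 hu with rfl | hu'
        · exact mem_sufS.2 ⟨hc, le_refl _⟩
        · rw [mem_singleton.1 hu']; exact mem_sufS.2 ⟨hb, le_of_lt hcd⟩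
      · intro hmem
        exact absurd (mem_sufS.1 hmem).2 (by omega)
    · -- idx c < idx a : Z ⊆ sufS a, c ∉ sufS a
      refine ⟨_, suf_mem_SS ha, phi_helper hr (sufS_subset X r a) ?_ (card_pair habne)
        (mem_insert_self c ({b} : Finset α)) ?_ hcX (ne_of_mem_erase hc)⟩
      · intro u hu
        rcases mem_insert.1 hu with rfl | hu'
        · exact mem_sufS.2 ⟨ha, le_refl _⟩
        · rw [mem_singleton.1 hu']; exact mem_sufS.2 ⟨hb, le_of_lt hab⟩
      · intro hmem
        exact absurd (mem_sufS.1 hmem).2 (by omega)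
  · -- idx d < idx b : separate by the prefix at d
    refine ⟨_, pre_mem_SS hd, phiNe_symm (phi_helper hr (preS_subset X r d) ?_
      (card_pair hcdne) (mem_insert_of_mem (mem_singleton_self b)) ?_ hbX
      (ne_of_mem_erase hb))⟩
    · intro u hu
      rcases mem_insert.1 hu with rfl | hu'
      · exact mem_preS.2 ⟨hc, le_of_lt hcd⟩
      · rw [mem_singleton.1 hu']; exact mem_preS.2 ⟨hd, le_refl _⟩
    · intro hmem
      exact absurd (mem_preS.1 hmem).2 (by omega)

lemma pre_pre_compat {X : Finset α} {r y y' : α}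
    (h : Incompatible ({preS X r y, X \ preS X r y} : Finset (Finset α))
      ({preS X r y', X \ preS X r y'} : Finset (Finset α))) : False := by
  rcases le_total (idxL X r y) (idxL X r y') with hle | hle
  · refine h.2 (preS X r y) (mem_insert_self _ _) (X \ preS X r y')
      (mem_insert_of_mem (mem_singleton_self _)) ?_
    refine eq_empty_iff_forall_notMem.2 fun z hz => ?_
    obtain ⟨hz1, hz2⟩ := mem_inter.1 hz
    obtain ⟨hz3, hz4⟩ := mem_preS.1 hz1
    exact (mem_sdiff.1 hz2).2 (mem_preS.2 ⟨hz3, le_trans hz4 hle⟩)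
  · refine h.2 (X \ preS X r y) (mem_insert_of_mem (mem_singleton_self _)) (preS X r y')
      (mem_insert_self _ _) ?_
    refine eq_empty_iff_forall_notMem.2 fun z hz => ?_
    obtain ⟨hz1, hz2⟩ := mem_inter.1 hz
    obtain ⟨hz3, hz4⟩ := mem_preS.1 hz2
    exact (mem_sdiff.1 hz1).2 (mem_preS.2 ⟨hz3, le_trans hz4 hle⟩)

lemma suf_suf_compat {X : Finset α} {r y y' : α}
    (h : Incompatible ({sufS X r y, X \ sufS X r y} : Finset (Finset α))
      ({sufS X r y', X \ sufS X r y'} : Finset (Finset α))) : False := by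
  rcases le_total (idxL X r y) (idxL X r y') with hle | hle
  · refine h.2 (X \ sufS X r y) (mem_insert_of_mem (mem_singleton_self _)) (sufS X r y')
      (mem_insert_self _ _) ?_
    refine eq_empty_iff_forall_notMem.2 fun z hz => ?_
    obtain ⟨hz1, hz2⟩ := mem_inter.1 hz
    obtain ⟨hz3, hz4⟩ := mem_sufS.1 hz2
    exact (mem_sdiff.1 hz1).2 (mem_sufS.2 ⟨hz3, le_trans hle hz4⟩)
  · refine h.2 (sufS X r y) (mem_insert_self _ _) (X \ sufS X r y')
      (mem_insert_of_mem (mem_singleton_self _)) ?_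
    refine eq_empty_iff_forall_notMem.2 fun z hz => ?_
    obtain ⟨hz1, hz2⟩ := mem_inter.1 hz
    obtain ⟨hz3, hz4⟩ := mem_sufS.1 hz1
    exact (mem_sdiff.1 hz2).2 (mem_sufS.2 ⟨hz3, le_trans hle hz4⟩)

/-- A sorted triple of distinct elements of `X.erase r`. -/
lemma sorted_triple {X : Finset α} {r : α} (h4 : 4 ≤ X.card) (hr : r ∈ X) :
    ∃ a ∈ X.erase r, ∃ b ∈ X.erase r, ∃ c ∈ X.erase r,
      idxL X r a < idxL X r b ∧ idxL X r b < idxL X r c := by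
  have hMcard : 2 < (X.erase r).card := by
    rw [card_erase_of_mem hr]; omega
  obtain ⟨x, y, z, hx, hy, hz, hxy, hxz, hyz⟩ := two_lt_card_iff.1 hMcard
  have h1 : idxL X r x ≠ idxL X r y := fun h => hxy (idxL_inj hx hy h)
  have h2 : idxL X r y ≠ idxL X r z := fun h => hyz (idxL_inj hy hz h)
  have h3 : idxL X r x ≠ idxL X r z := fun h => hxz (idxL_inj hx hz h)
  rcases h1.lt_or_gt with a1 | a1 <;> rcases h2.lt_or_gt with a2 | a2 <;>
    rcases h3.lt_or_gt with a3 | a3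
  · exact ⟨x, hx, y, hy, z, hz, a1, a2⟩
  · omega
  · exact ⟨x, hx, z, hz, y, hy, a3, a2⟩
  · exact ⟨z, hz, x, hx, y, hy, a3, a1⟩
  · exact ⟨y, hy, x, hx, z, hz, a1, a3⟩
  · exact ⟨y, hy, z, hz, x, hx, a2, a3⟩
  · omega
  · exact ⟨z, hz, y, hy, x, hx, a2, a1⟩

lemma cross_incompat {X : Finset α} {r a b c : α} (hr : r ∈ X)
    (ha : a ∈ X.erase r) (hb : b ∈ X.erase r) (hc : c ∈ X.erase r)
    (h1 : idxL X r a < idxL X r b) (h2 : idxL X r b < idxL X r c) :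
    Incompatible ({preS X r b, X \ preS X r b} : Finset (Finset α))
      ({sufS X r b, X \ sufS X r b} : Finset (Finset α)) := by
  have haX : a ∈ X := mem_of_mem_erase ha
  have hbX : b ∈ X := mem_of_mem_erase hb
  have hcX : c ∈ X := mem_of_mem_erase hc
  have hapre : a ∈ preS X r b := mem_preS.2 ⟨ha, le_of_lt h1⟩
  have hbpre : b ∈ preS X r b := mem_preS.2 ⟨hb, le_refl _⟩
  have hcpre : c ∉ preS X r b := fun h => by
    have := (mem_preS.1 h).2; omega
  have hbsuf : b ∈ sufS X r b := mem_sufS.2 ⟨hb, le_refl _⟩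
  have hcsuf : c ∈ sufS X r b := mem_sufS.2 ⟨hc, le_of_lt h2⟩
  have hasuf : a ∉ sufS X r b := fun h => by
    have := (mem_sufS.1 h).2; omega
  constructor
  · intro h
    have hmem : preS X r b ∈ ({sufS X r b, X \ sufS X r b} : Finset (Finset α)) :=
      h ▸ mem_insert_self _ _
    rcases mem_insert.1 hmem with h' | h'
    · exact hasuf (h' ▸ hapre)
    · have := mem_singleton.1 h' ▸ hbpre
      exact (mem_sdiff.1 this).2 hbsuf
  · intro U hU V hV
    have hUc : U = preS X r b ∨ U = X \ preS X r b := by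
      rcases mem_insert.1 hU with h' | h'
      · exact Or.inl h'
      · exact Or.inr (mem_singleton.1 h')
    have hVc : V = sufS X r b ∨ V = X \ sufS X r b := by
      rcases mem_insert.1 hV with h' | h'
      · exact Or.inl h'
      · exact Or.inr (mem_singleton.1 h')
    rcases hUc with rfl | rfl <;> rcases hVc with rfl | rfl
    · exact Finset.Nonempty.ne_empty ⟨b, mem_inter.2 ⟨hbpre, hbsuf⟩⟩
    · exact Finset.Nonempty.ne_empty ⟨a, mem_inter.2 ⟨hapre, mem_sdiff.2 ⟨haX, hasuf⟩⟩⟩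
    · exact Finset.Nonempty.ne_empty ⟨c, mem_inter.2 ⟨mem_sdiff.2 ⟨hcX, hcpre⟩, hcsuf⟩⟩
    · exact Finset.Nonempty.ne_empty ⟨r, mem_inter.2
        ⟨mem_sdiff.2 ⟨hr, r_not_mem_preS X r b⟩, mem_sdiff.2 ⟨hr, r_not_mem_sufS X r b⟩⟩⟩

lemma SS_dim {X : Finset α} {r : α} (h4 : 4 ≤ X.card) (hr : r ∈ X) :
    dimSS (SS X r) = 2 := by
  classical
  obtain ⟨a, ha, b, hb, c, hc, h1, h2⟩ := sorted_triple h4 hr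
  have hcross := cross_incompat hr ha hb hc h1 h2
  rw [dimSS]
  apply le_antisymm
  · -- upper bound
    refine Finset.sup_le fun 𝒯 h𝒯 => ?_
    obtain ⟨hpow, hpair⟩ := mem_filter.1 h𝒯
    have hsub := mem_powerset.1 hpow
    by_contra hgt
    push_neg at hgt
    obtain ⟨S1, S2, S3, hS1, hS2, hS3, h12, h13, h23⟩ := two_lt_card_iff.1 hgt
    -- no trivial split can appear
    have cls : ∀ S ∈ 𝒯, (∃ y, S = ({preS X r y, X \ preS X r y} : Finset (Finset α)))
        ∨ (∃ y, S = ({sufS X r y, X \ sufS X r y} : Finset (Finset α))) := by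
      intro S hS
      have hpick : ∃ T ∈ 𝒯, S ≠ T := by
        by_cases hS1' : S = S1
        · exact ⟨S2, hS2, fun h => h12 (hS1' ▸ h ▸ rfl)⟩
        · exact ⟨S1, hS1, hS1'⟩
      obtain ⟨T, hT, hSTne⟩ := hpick
      have hinc := hpair S hS T hT hSTne
      rcases mem_union.1 (hsub hS) with h | h
      · rcases mem_union.1 h with h' | h'
        · obtain ⟨x, hx, heq⟩ := mem_image.1 h'
          exact absurd hinc (fun hi => triv_compat (SS_split h4 hr (hsub hT)) hx (heq ▸ hi))
        · obtain ⟨y, _, heq⟩ := mem_image.1 h'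
          exact Or.inl ⟨y, heq.symm⟩
      · obtain ⟨y, _, heq⟩ := mem_image.1 h
        exact Or.inr ⟨y, heq.symm⟩
    rcases cls S1 hS1 with ⟨y1, e1⟩ | ⟨y1, e1⟩ <;> rcases cls S2 hS2 with ⟨y2, e2⟩ | ⟨y2, e2⟩ <;>
      rcases cls S3 hS3 with ⟨y3, e3⟩ | ⟨y3, e3⟩
    · exact pre_pre_compat (e1 ▸ e2 ▸ hpair S1 hS1 S2 hS2 h12)
    · exact pre_pre_compat (e1 ▸ e2 ▸ hpair S1 hS1 S2 hS2 h12)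
    · exact pre_pre_compat (e1 ▸ e3 ▸ hpair S1 hS1 S3 hS3 h13)
    · exact suf_suf_compat (e2 ▸ e3 ▸ hpair S2 hS2 S3 hS3 h23)
    · exact pre_pre_compat (e2 ▸ e3 ▸ hpair S2 hS2 S3 hS3 h23)
    · exact suf_suf_compat (e1 ▸ e3 ▸ hpair S1 hS1 S3 hS3 h13)
    · exact suf_suf_compat (e1 ▸ e2 ▸ hpair S1 hS1 S2 hS2 h12)
    · exact suf_suf_compat (e1 ▸ e2 ▸ hpair S1 hS1 S2 hS2 h12)
  · -- lower bound
    have hmem : ({({preS X r b, X \ preS X r b} : Finset (Finset α)),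
        ({sufS X r b, X \ sufS X r b} : Finset (Finset α))} :
          Finset (Finset (Finset α))) ∈
        ((SS X r).powerset.filter fun 𝒯 => ∀ S ∈ 𝒯, ∀ T ∈ 𝒯, S ≠ T → Incompatible S T) := by
      refine mem_filter.2 ⟨mem_powerset.2 (insert_subset_iff.2
        ⟨pre_mem_SS hb, singleton_subset_iff.2 (suf_mem_SS hb)⟩), ?_⟩
      intro U hU V hV hUV
      rcases mem_insert.1 hU with rfl | hU' <;> rcases mem_insert.1 hV with rfl | hV'
      · exact absurd rfl hUV
      · rw [mem_singleton.1 hV']; exact hcross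
      · rw [mem_singleton.1 hU']; exact incompatible_symm hcross
      · rw [mem_singleton.1 hU', mem_singleton.1 hV'] at hUV; exact absurd rfl hUV
    calc 2 = ({({preS X r b, X \ preS X r b} : Finset (Finset α)),
        ({sufS X r b, X \ sufS X r b} : Finset (Finset α))} :
          Finset (Finset (Finset α))).card := (card_pair hcross.1).symm
      _ ≤ _ := Finset.le_sup hmem

/-- For `X` with `n = |X| ≥ 4` and `r ∈ X`, there exists a split
system on `X` that is rooted-injective relative to `r` of dimension 2; moreover
`ID^r(n) = 2`. -/
theorem statement19 (X : Finset α) (n : ℕ) (hcard : X.card = n) (hn : 4 ≤ n)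
    (r : α) (hr : r ∈ X) :
    (∃ 𝒮 : Finset (Finset (Finset α)),
      IsSplitSystem X 𝒮 ∧ IsRootedInjective X r 𝒮 ∧ dimSS 𝒮 = 2) ∧
    IDr n = 2 := by
  have hX4 : 4 ≤ X.card := by omega
  refine ⟨⟨SS X r, SS_system hX4 hr, SS_rooted X r hr, SS_dim hX4 hr⟩, ?_⟩
  have hc : (Finset.Icc 1 n).card = n := by rw [Nat.card_Icc]; omega
  have h1 : (1 : ℕ) ∈ Finset.Icc 1 n := Finset.mem_Icc.2 ⟨le_refl 1, by omega⟩
  have h4' : 4 ≤ (Finset.Icc 1 n).card := by omega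
  have hmem : 2 ∈ {d : ℕ | ∃ 𝒮 : Finset (Finset (Finset ℕ)),
      IsSplitSystem (Finset.Icc 1 n) 𝒮 ∧ IsRootedInjective (Finset.Icc 1 n) 1 𝒮 ∧
      dimSS 𝒮 = d} :=
    ⟨SS (Finset.Icc 1 n) 1, SS_system h4' h1, SS_rooted _ _ h1, SS_dim h4' h1⟩
  rw [IDr]
  refine le_antisymm (Nat.sInf_le hmem) (le_csInf ⟨2, hmem⟩ ?_)
  rintro d ⟨𝒮, hsys, hrin, rfl⟩
  exact two_le_dimSS h4' h1 hsys hrin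

end InjectiveSplitSystems
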